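/- Let A, B ∈ M₂(ℂ) with tr(A) = 0. Then for every real q, ‖AB − qBA‖_F² ≤ (1 + q²)‖A‖_F²‖B‖_F². -/

import Mathlib

open Matrix
open scoped BigOperators Matrix

noncomputable def frobSq (M : Matrix (Fin 2) (Fin 2) ℂ) : ℝ :=
  ∑ i, ∑ j, ‖M i j‖ ^ 2

lemma normSq' (z : ℂ) : ‖z‖ ^ 2 = z.re ^ 2 + z.im ^ 2 := by
  rw [Complex.sq_norm, Complex.normSq_apply]; ring

noncomputable def cross (X Y : Matrix (Fin 2) (Fin 2) ℂ) : ℝ :=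
  ∑ i, ∑ j, ((starRingEnd ℂ) (X i j) * Y i j).re

lemma expand (X Y : Matrix (Fin 2) (Fin 2) ℂ) (q : ℝ) :
    frobSq (X - (q:ℂ) • Y) = frobSq X + q^2 * frobSq Y - 2*q*cross X Y := by
  simp only [frobSq, cross, Fin.sum_univ_two, normSq', Matrix.sub_apply, Matrix.smul_apply,
    smul_eq_mul, Complex.sub_re, Complex.sub_im, Complex.mul_re, Complex.mul_im,
    Complex.ofReal_re, Complex.ofReal_im, Complex.conj_re, Complex.conj_im]
  ring

lemma key1 (A B : Matrix (Fin 2) (Fin 2) ℂ) (hA : A 1 1 = - A 0 0) :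
    frobSq (A * B) + frobSq (Aᴴ * B) = frobSq A * frobSq B := by
  simp only [frobSq, Fin.sum_univ_two, normSq', Matrix.mul_apply, Matrix.conjTranspose_apply,
    hA, Complex.add_re, Complex.add_im, Complex.mul_re, Complex.mul_im, Complex.neg_re,
    Complex.neg_im, Complex.conj_re, Complex.conj_im, star]
  ring

lemma key2 (A B : Matrix (Fin 2) (Fin 2) ℂ) (hA : A 1 1 = - A 0 0) :
    frobSq (B * A) + frobSq (B * Aᴴ) = frobSq A * frobSq B := by
  simp only [frobSq, Fin.sum_univ_two, normSq', Matrix.mul_apply, Matrix.conjTranspose_apply,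
    hA, Complex.add_re, Complex.add_im, Complex.mul_re, Complex.mul_im, Complex.neg_re,
    Complex.neg_im, Complex.conj_re, Complex.conj_im, star]
  ring

lemma key3 (A B : Matrix (Fin 2) (Fin 2) ℂ) :
    cross (A * B) (B * A) = cross (Aᴴ * B) (B * Aᴴ) := by
  simp only [cross, Fin.sum_univ_two, Matrix.mul_apply, Matrix.conjTranspose_apply,
    _root_.map_add, _root_.map_mul, Complex.add_re, Complex.add_im, Complex.mul_re, Complex.mul_im,
    Complex.conj_re, Complex.conj_im, star]
  ring

lemma cs (X Y : Matrix (Fin 2) (Fin 2) ℂ) : (cross X Y)^2 ≤ frobSq X * frobSq Y := by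
  have h := Finset.sum_mul_sq_le_sq_mul_sq Finset.univ
    (fun p : Fin 2 × Fin 2 × Bool => if p.2.2 then (X p.1 p.2.1).re else (X p.1 p.2.1).im)
    (fun p : Fin 2 × Fin 2 × Bool => if p.2.2 then (Y p.1 p.2.1).re else (Y p.1 p.2.1).im)
  simp only [Fintype.sum_prod_type, Fintype.sum_bool, Fin.sum_univ_two, reduceIte,
    Bool.false_eq_true, if_true, if_false] at h
  have e1 : (cross X Y)^2 = (∑ i : Fin 2, ∑ j : Fin 2,
      ((X i j).re * (Y i j).re + (X i j).im * (Y i j).im))^2 := by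
    simp only [cross, Fin.sum_univ_two, Complex.mul_re, Complex.conj_re, Complex.conj_im]
    ring
  have e2 : frobSq X = ∑ i : Fin 2, ∑ j : Fin 2, ((X i j).re^2 + (X i j).im^2) := by
    simp only [frobSq, normSq']
  have e3 : frobSq Y = ∑ i : Fin 2, ∑ j : Fin 2, ((Y i j).re^2 + (Y i j).im^2) := by
    simp only [frobSq, normSq']
  rw [e1, e2, e3]
  simp only [Fin.sum_univ_two]
  refine le_trans (le_of_eq ?_) (le_trans h (le_of_eq ?_)) <;> ring

lemma frobSq_nonneg (M : Matrix (Fin 2) (Fin 2) ℂ) : 0 ≤ frobSq M := by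
  unfold frobSq; positivity

theorem stmt_11 (A B : Matrix (Fin 2) (Fin 2) ℂ) (hA : A.trace = 0) (q : ℝ) :
    frobSq (A * B - (q : ℂ) • (B * A)) ≤ (1 + q ^ 2) * frobSq A * frobSq B := by
  have hA11 : A 1 1 = - A 0 0 := by
    have h := hA
    simp only [Matrix.trace, Matrix.diag, Fin.sum_univ_two] at h
    linear_combination h
  have k1 := key1 A B hA11
  have k2 := key2 A B hA11
  have k3 := key3 A B
  have hc := cs (Aᴴ * B) (B * Aᴴ)
  have hs := frobSq_nonneg (Aᴴ * B)
  have ht := frobSq_nonneg (B * Aᴴ)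
  rw [expand, k3]
  have key : 0 ≤ frobSq (Aᴴ * B) + q^2 * frobSq (B * Aᴴ) + 2*q*cross (Aᴴ * B) (B * Aᴴ) := by
    nlinarith [sq_nonneg (frobSq (Aᴴ * B) - q^2 * frobSq (B * Aᴴ)),
      mul_nonneg (sq_nonneg q) (sub_nonneg.2 hc), mul_nonneg (sq_nonneg q) ht, hs,
      sq_nonneg (q * cross (Aᴴ * B) (B * Aᴴ))]
  nlinarith [key, mul_nonneg (sq_nonneg q) ht, hs]
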